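/- Let M be a finitely generated free ℤ-module and (M, ‖·‖) a normed ℤ-module (‖·‖ a norm on M ⊗ ℝ). Define λ(M, ‖·‖) as the infimum of λ > 0 such that M admits a free ℤ-basis e₁,…,e_n with ‖e_i‖ ≤ λ for all i, and λ′(M, ‖·‖) as the infimum of λ′ > 0 such that there exist e₁,…,e_n ∈ M forming a ℚ-basis of M ⊗ ℚ with ‖e_i‖ ≤ λ′ for all i. Then λ′(M, ‖·‖) ≤ λ(M, ‖·‖) ≤ λ′(M, ‖·‖) · rk M. -/

import Mathlib

open Submodule

lemma Nsum {n : ℕ} (N : (Fin n → ℝ) → ℝ) (hN0 : N 0 = 0)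
    (hNadd : ∀ x y, N (x + y) ≤ N x + N y) (s : Finset (Fin n)) (v : Fin n → Fin n → ℝ) :
    N (∑ j ∈ s, v j) ≤ ∑ j ∈ s, N (v j) := by
  classical
  induction s using Finset.induction with
  | empty => simp [hN0]
  | @insert a s hx ih =>
    rw [Finset.sum_insert hx, Finset.sum_insert hx]
    exact le_trans (hNadd _ _) (by linarith)

lemma rat_submodule_principal (T : Submodule ℤ ℚ) (hT : T.FG) : ∃ q : ℚ, T = span ℤ {q} := by
  have hfrac : IsFractional (nonZeroDivisors ℤ) T := FractionalIdeal.isFractional_of_fg hT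
  let I : FractionalIdeal (nonZeroDivisors ℤ) ℚ := ⟨T, hfrac⟩
  have hP : Submodule.IsPrincipal (I : Submodule ℤ ℚ) := inferInstance
  obtain ⟨q, hq⟩ := hP
  exact ⟨q, hq⟩

lemma key (n : ℕ) (N : (Fin n → ℝ) → ℝ)
    (hN0 : ∀ x, 0 ≤ N x) (hNeq : ∀ x, N x = 0 ↔ x = 0)
    (hNsmul : ∀ (a : ℝ) (x), N (a • x) = |a| * N x)
    (hNadd : ∀ x y, N (x + y) ≤ N x + N y)
    (l : ℝ) (e : Fin n → Fin n → ℤ)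
    (he : LinearIndependent ℚ (fun i => (fun j => ((e i j : ℚ)) : Fin n → ℚ)))
    (hbl : ∀ i, N (fun j => ((e i j : ℝ))) ≤ l) (hn : 0 < n) :
    ∃ f : Fin n → (Fin n → ℤ),
      (∃ B : Module.Basis (Fin n) ℤ (Fin n → ℤ), ∀ i, B i = f i) ∧
      ∀ i, N (fun j => ((f i j : ℝ))) ≤ l * n := by
  classical
  have : Nonempty (Fin n) := ⟨⟨0, hn⟩⟩
  have hl0 : 0 ≤ l := le_trans (hN0 _) (hbl ⟨0, hn⟩)
  set E : Fin n → Fin n → ℚ := fun i => (fun j => ((e i j : ℚ))) with hE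
  set φ : (Fin n → ℤ) →ₗ[ℤ] (Fin n → ℚ) :=
    LinearMap.compLeft (Algebra.linearMap ℤ ℚ) (Fin n) with hφdef
  have hφ : ∀ x j, φ x j = (x j : ℚ) := fun x j => rfl
  have hφe : ∀ i, φ (e i) = E i := fun i => rfl
  have hφinj : Function.Injective φ := by
    intro x y hxy
    funext j
    have h2 : ((x j : ℚ)) = ((y j : ℚ)) := congrFun hxy j
    exact_mod_cast h2
  have hfinrank : Fintype.card (Fin n) = Module.finrank ℚ (Fin n → ℚ) := by simp
  set Bq : Module.Basis (Fin n) ℚ (Fin n → ℚ) :=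
    basisOfLinearIndependentOfCardEqFinrank he hfinrank with hBqdef
  have hBq : ∀ i, Bq i = E i := fun i => by
    rw [hBqdef, coe_basisOfLinearIndependentOfCardEqFinrank]
  set V : ℕ → Submodule ℚ (Fin n → ℚ) := fun i => span ℚ (E '' {j : Fin n | (j : ℕ) < i}) with hV
  set L : ℕ → Submodule ℤ (Fin n → ℤ) :=
    fun i => Submodule.comap φ ((V i).restrictScalars ℤ) with hL
  have heL : ∀ (i : ℕ) (j : Fin n), (j : ℕ) < i → e j ∈ L i := by
    intro i j hj
    simp only [hL, Submodule.mem_comap, restrictScalars_mem, hφe]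
    exact subset_span ⟨j, hj, rfl⟩
  have main : ∀ i : ℕ, i ≤ n → ∃ f : Fin n → (Fin n → ℤ),
      span ℤ (f '' {k : Fin n | (k : ℕ) < i}) = L i ∧
      ∀ k : Fin n, (k : ℕ) < i → N (fun j => ((f k j : ℝ))) ≤ l * n := by
    intro i hi
    induction i with
    | zero =>
      refine ⟨fun _ => 0, ?_, fun k hk => absurd hk (Nat.not_lt_zero _)⟩
      have : {k : Fin n | (k : ℕ) < 0} = ∅ := by ext k; simp
      rw [this, Set.image_empty, span_empty]
      symm
      rw [eq_bot_iff]
      intro x hx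
      simp only [hL, hV, Submodule.mem_comap, restrictScalars_mem] at hx
      have : {j : Fin n | (j : ℕ) < 0} = ∅ := by ext k; simp
      rw [this, Set.image_empty, span_empty, Submodule.mem_bot] at hx
      have : x = 0 := hφinj (by rw [hx, map_zero])
      simp [this]
    | succ i ih =>
      obtain ⟨f, hspan, hbnd⟩ := ih (Nat.le_of_succ_le hi)
      have hin : i < n := hi
      set i' : Fin n := ⟨i, hin⟩ with hi'

      have hle_i : (i : ℕ) ≤ n := Nat.le_of_succ_le hi
      -- coordinate functional
      set ψ : (Fin n → ℚ) →ₗ[ℚ] ℚ := Bq.coord i' with hψdef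
      have hψE : ∀ j, ψ (E j) = if j = i' then 1 else 0 := by
        intro j
        rw [← hBq j, hψdef, Module.Basis.coord_apply, Module.Basis.repr_self]
        simp [Finsupp.single_apply]
      have hψV : ∀ x ∈ V i, ψ x = 0 := by
        intro x hx
        have hle : V i ≤ LinearMap.ker ψ := by
          show span ℚ _ ≤ _
          rw [span_le]
          rintro y ⟨j, hj, rfl⟩
          have hji : j ≠ i' := by
            intro h
            rw [h] at hj
            exact absurd hj (lt_irrefl i)
          simp [LinearMap.mem_ker, hψE j, hji]
        exact hle hx
      have hsetsplit : {j : Fin n | (j : ℕ) < i + 1} = {j : Fin n | (j : ℕ) < i} ∪ {i'} := by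
        ext j
        simp only [Set.mem_setOf_eq, Set.mem_union, Set.mem_singleton_iff, Nat.lt_succ_iff_lt_or_eq]
        constructor
        · rintro (h | h)
          · exact Or.inl h
          · exact Or.inr (Fin.ext h)
        · rintro (h | h)
          · exact Or.inl h
          · exact Or.inr (by rw [h])
      have hV1 : V (i + 1) = V i ⊔ span ℚ {E i'} := by
        show span ℚ (E '' {j : Fin n | (j : ℕ) < i + 1}) = _
        rw [hsetsplit, Set.image_union, span_union, Set.image_singleton]
      have hVmono : V i ≤ V (i + 1) := by
        show span ℚ (E '' {j : Fin n | (j : ℕ) < i}) ≤ span ℚ (E '' {j : Fin n | (j : ℕ) < i + 1})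
        apply span_mono
        apply Set.image_mono
        intro j hj
        exact Nat.lt_succ_of_lt hj
      have hLmono : L i ≤ L (i + 1) := fun x hx => hVmono hx
      have hdecomp : ∀ x ∈ V (i + 1), ψ x = 0 → x ∈ V i := by
        intro x hx hx0
        rw [hV1, Submodule.mem_sup] at hx
        obtain ⟨v, hv, w, hw, rfl⟩ := hx
        rw [Submodule.mem_span_singleton] at hw
        obtain ⟨a, rfl⟩ := hw
        have ha : a = 0 := by
          have : ψ (v + a • E i') = a := by
            rw [map_add, hψV v hv, map_smul, hψE, if_pos rfl]
            simp
          rw [hx0] at this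
          exact this.symm
        rw [ha]
        simpa using hv
      set ρ : (Fin n → ℤ) →ₗ[ℤ] ℚ := (ψ.restrictScalars ℤ).comp φ with hρdef
      have hρ : ∀ x, ρ x = ψ (φ x) := fun x => rfl
      set T : Submodule ℤ ℚ := Submodule.map ρ (L (i + 1)) with hT
      have hTfg : T.FG := Submodule.FG.map _ (IsNoetherian.noetherian _)
      obtain ⟨q, hq⟩ := rat_submodule_principal T hTfg
      have h1T : (1 : ℚ) ∈ T := by
        refine ⟨e i', heL (i + 1) i' (Nat.lt_succ_self i), ?_⟩
        rw [hρ, hφe, hψE, if_pos rfl]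
      have hqabs : |q| ≤ 1 := by
        rw [hq, Submodule.mem_span_singleton] at h1T
        obtain ⟨m, hm⟩ := h1T
        have hm' : (m : ℚ) * q = 1 := by rw [← hm]; simp
        have hm0 : m ≠ 0 := by rintro rfl; simp at hm'
        have habs : |(m : ℚ)| * |q| = 1 := by rw [← abs_mul, hm']; norm_num
        have h1 : (1 : ℚ) ≤ |(m : ℚ)| := by exact_mod_cast Int.one_le_abs hm0
        nlinarith [abs_nonneg q, abs_nonneg ((m : ℚ))]
      have hqT : q ∈ T := by rw [hq]; exact subset_span rfl
      obtain ⟨g₀, hg₀L, hg₀ρ⟩ := hqT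
      set c : Fin n → ℚ := fun j => Bq.repr (φ g₀) j with hc
      set mz : Fin n → ℤ := fun j => if (j : ℕ) < i then ⌊c j⌋ else 0 with hmz
      set g : Fin n → ℤ := g₀ - ∑ j, mz j • e j with hgdef
      set c' : Fin n → ℚ := fun j => c j - mz j with hc'
      have hg₀V : φ g₀ ∈ V (i + 1) := hg₀L
      have hii : (i' : ℕ) = i := rfl
      have hci' : c i' = q := by
        have h1 : ψ (φ g₀) = q := by rw [← hρ]; exact hg₀ρ
        rw [hψdef, Module.Basis.coord_apply] at h1
        exact h1
      have hmzi' : mz i' = 0 := by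
        show (if ((i' : ℕ)) < i then ⌊c i'⌋ else 0) = 0
        rw [hii]
        simp
      have hcj0 : ∀ j : Fin n, i < (j : ℕ) → c j = 0 := by
        intro j hj
        have himg : E '' {k : Fin n | (k : ℕ) < i + 1} = Bq '' {k : Fin n | (k : ℕ) < i + 1} := by
          apply Set.image_congr
          intro k _
          exact (hBq k).symm
        have hmem : φ g₀ ∈ span ℚ (Bq '' {k : Fin n | (k : ℕ) < i + 1}) := by
          rw [← himg]
          exact hg₀V
        rw [Module.Basis.mem_span_image] at hmem
        by_contra hne
        have : j ∈ {k : Fin n | (k : ℕ) < i + 1} := hmem (Finsupp.mem_support_iff.mpr hne)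
        simp only [Set.mem_setOf_eq] at this
        omega
      have hc'bound : ∀ j, |c' j| ≤ 1 := by
        intro j
        rcases lt_trichotomy (j : ℕ) i with h | h | h
        · have h1 : c' j = c j - ⌊c j⌋ := by
            show c j - ((if (j : ℕ) < i then ⌊c j⌋ else 0 : ℤ) : ℚ) = c j - ⌊c j⌋
            rw [if_pos h]
          rw [h1, abs_of_nonneg (by linarith [Int.floor_le (c j)])]
          linarith [Int.lt_floor_add_one (c j)]
        · have hji : j = i' := Fin.ext h
          have h1 : c' j = q := by
            have h2 : c' i' = c i' - ((mz i' : ℤ) : ℚ) := rfl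
            rw [hji, h2, hci', hmzi']
            simp
          rw [h1]
          exact hqabs
        · have h1 : c' j = 0 := by
            have h2 : c' j = c j - ((mz j : ℤ) : ℚ) := rfl
            have h3 : mz j = 0 := by
              show (if (j : ℕ) < i then ⌊c j⌋ else 0) = 0
              rw [if_neg (by omega)]
            rw [h2, h3, hcj0 j h]
            simp
          rw [h1]
          norm_num
      have hgL : g ∈ L (i + 1) := by
        rw [hgdef]
        refine sub_mem hg₀L (sum_mem ?_)
        intro j _
        by_cases h : (j : ℕ) < i
        · exact Submodule.smul_mem _ _ (heL (i + 1) j (Nat.lt_succ_of_lt h))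
        · have h3 : mz j = 0 := by
            show (if (j : ℕ) < i then ⌊c j⌋ else 0) = 0
            rw [if_neg h]
          rw [h3]
          simp
      have hsum : φ g = ∑ j, c' j • E j := by
        have h1 : φ g₀ = ∑ j, c j • E j := by
          conv_lhs => rw [← Bq.sum_repr (φ g₀)]
          refine Finset.sum_congr rfl fun j _ => ?_
          rw [hBq j, hc]
        have h2 : φ (∑ j, mz j • e j) = ∑ j, (mz j : ℚ) • E j := by
          rw [map_sum]
          refine Finset.sum_congr rfl fun j _ => ?_
          rw [map_zsmul, hφe]
          rw [Int.cast_smul_eq_zsmul ℚ]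
        rw [hgdef, map_sub, h1, h2, ← Finset.sum_sub_distrib]
        refine Finset.sum_congr rfl fun j _ => ?_
        rw [← sub_smul]
      have hρg : ρ g = q := by
        rw [hρ, hsum, map_sum]
        have : ∀ j, ψ (c' j • E j) = if j = i' then c' j else 0 := by
          intro j
          rw [map_smul, hψE j]
          by_cases h : j = i' <;> simp [h]
        rw [Finset.sum_congr rfl fun j _ => this j, Finset.sum_ite_eq' Finset.univ i' c']
        have h2 : c' i' = c i' - ((mz i' : ℤ) : ℚ) := rfl
        rw [if_pos (Finset.mem_univ i'), h2, hci', hmzi']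
        simp
      -- the new family
      set f' : Fin n → (Fin n → ℤ) := Function.update f i' g with hf'
      have hf'eq : ∀ k : Fin n, (k : ℕ) < i → f' k = f k := by
        intro k hk
        rw [hf']
        apply Function.update_of_ne
        intro h
        rw [h] at hk
        exact absurd hk (lt_irrefl i)
      have hf'i' : f' i' = g := by rw [hf']; simp
      have himgeq : f '' {k : Fin n | (k : ℕ) < i} = f' '' {k : Fin n | (k : ℕ) < i} :=
        (Set.image_congr fun k hk => (hf'eq k hk).symm)
      refine ⟨f', ?_, ?_⟩
      · apply le_antisymm
        · rw [span_le]
          rintro x ⟨k, hk, rfl⟩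
          simp only [Set.mem_setOf_eq, Nat.lt_succ_iff_lt_or_eq] at hk
          rcases hk with hk | hk
          · rw [hf'eq k hk]
            exact hLmono (hspan ▸ subset_span ⟨k, hk, rfl⟩)
          · have : k = i' := Fin.ext hk
            rw [this, hf'i']
            exact hgL
        · intro x hx
          have hρx : ρ x ∈ T := ⟨x, hx, rfl⟩
          rw [hq, Submodule.mem_span_singleton] at hρx
          obtain ⟨mx, hmx⟩ := hρx
          set y : Fin n → ℤ := x - mx • g with hy
          have hyL : y ∈ L (i + 1) := sub_mem hx (Submodule.smul_mem _ _ hgL)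
          have hψy : ψ (φ y) = 0 := by
            have : ρ y = 0 := by
              rw [hy, map_sub, map_zsmul, hρg, ← hmx]
              simp
            rw [← hρ, this]
          have hyV : φ y ∈ V i := hdecomp (φ y) hyL hψy
          have hyLi : y ∈ L i := hyV
          have hyspan : y ∈ span ℤ (f' '' {k : Fin n | (k : ℕ) < i + 1}) := by
            have h1 : y ∈ span ℤ (f' '' {k : Fin n | (k : ℕ) < i}) := by
              rw [← himgeq, hspan]
              exact hyLi
            refine span_mono (Set.image_mono ?_) h1
            intro k hk
            exact Nat.lt_succ_of_lt hk
          have hgspan : g ∈ span ℤ (f' '' {k : Fin n | (k : ℕ) < i + 1}) := by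
            apply subset_span
            exact ⟨i', Nat.lt_succ_self i, hf'i'⟩
          have : x = y + mx • g := by rw [hy]; ring
          rw [this]
          exact add_mem hyspan (Submodule.smul_mem _ _ hgspan)
      · intro k hk
        rcases Nat.lt_succ_iff_lt_or_eq.mp hk with hk' | hk'
        · rw [hf'eq k hk']
          exact hbnd k hk'
        · have hki : k = i' := Fin.ext hk'
          rw [hki, hf'i']
          -- the norm bound for g
          have hreal : (fun j => ((g j : ℝ))) =
              ∑ k : Fin n, ((c' k : ℝ)) • (fun j => ((e k j : ℝ))) := by
            funext j
            have h1 : ((g j : ℚ)) = ∑ k : Fin n, c' k * ((e k j : ℚ)) := by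
              have := congrFun hsum j
              simpa [hφ, Finset.sum_apply, hE, smul_eq_mul] using this
            have h2 : ((g j : ℝ)) = ∑ k : Fin n, (c' k : ℝ) * ((e k j : ℝ)) := by
              exact_mod_cast congrArg (fun (x : ℚ) => (x : ℝ)) h1
            simpa [Finset.sum_apply, smul_eq_mul] using h2
          rw [hreal]
          have hle1 : N (∑ k : Fin n, ((c' k : ℝ)) • (fun j => ((e k j : ℝ)))) ≤
              ∑ k : Fin n, N (((c' k : ℝ)) • (fun j => ((e k j : ℝ)))) :=
            Nsum N ((hNeq 0).mpr rfl) hNadd Finset.univ _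
          refine le_trans hle1 ?_
          have hterm : ∀ k : Fin n, N (((c' k : ℝ)) • (fun j => ((e k j : ℝ)))) ≤ l := by
            intro k
            rw [hNsmul]
            have habs : |((c' k : ℝ))| ≤ 1 := by
              rw [← Rat.cast_abs]
              exact_mod_cast hc'bound k
            calc |((c' k : ℝ))| * N (fun j => ((e k j : ℝ)))
                ≤ 1 * l := mul_le_mul habs (hbl k) (hN0 _) zero_le_one
              _ = l := one_mul l
          calc ∑ k : Fin n, N (((c' k : ℝ)) • (fun j => ((e k j : ℝ))))
              ≤ ∑ _k : Fin n, l := Finset.sum_le_sum fun k _ => hterm k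
            _ = n * l := by simp [Finset.sum_const, nsmul_eq_mul]
            _ = l * n := mul_comm _ _

  obtain ⟨f, hspan, hbnd⟩ := main n le_rfl
  have huniv : {k : Fin n | (k : ℕ) < n} = Set.univ := by ext k; simp [k.isLt]
  rw [huniv, Set.image_univ] at hspan
  have hVtop : V n = ⊤ := by
    show span ℚ (E '' {j : Fin n | (j : ℕ) < n}) = ⊤
    have h1 : {j : Fin n | (j : ℕ) < n} = Set.univ := by ext k; simp [k.isLt]
    rw [h1, Set.image_univ]
    exact he.span_eq_top_of_card_eq_finrank hfinrank
  have hLtop : L n = ⊤ := by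
    show Submodule.comap φ ((V n).restrictScalars ℤ) = ⊤
    rw [hVtop]
    simp
  rw [hLtop] at hspan
  -- ℚ-span of φ ∘ f is top
  have hQspan : ⊤ ≤ span ℚ (Set.range (⇑φ ∘ f)) := by
    rw [← (Pi.basisFun ℚ (Fin n)).span_eq, span_le]
    rintro x ⟨i, rfl⟩
    have h1 : (Pi.basisFun ℚ (Fin n)) i = φ (Pi.single i 1) := by
      funext j
      simp [hφ, Pi.single_apply, apply_ite]
    rw [h1]
    have h2 : Pi.single i (1:ℤ) ∈ span ℤ (Set.range f) := by rw [hspan]; trivial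
    have h3 : φ (Pi.single i 1) ∈ Submodule.map φ (span ℤ (Set.range f)) := ⟨_, h2, rfl⟩
    rw [Submodule.map_span] at h3
    have h4 : span ℤ (⇑φ '' Set.range f) ≤ restrictScalars ℤ (span ℚ (Set.range (⇑φ ∘ f))) := by
      rw [span_le]
      rintro y ⟨z, ⟨i2, rfl⟩, rfl⟩
      exact subset_span ⟨i2, rfl⟩
    exact h4 h3
  have hQli : LinearIndependent ℚ (φ ∘ f) :=
    linearIndependent_of_top_le_span_of_card_eq_finrank hQspan hfinrank
  have hZli : LinearIndependent ℤ f := by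
    refine LinearIndependent.of_comp φ ?_
    exact hQli.restrict_scalars (by intro a b h; simpa using h)
  refine ⟨f, ⟨Module.Basis.mk hZli hspan.ge, fun i => Module.Basis.mk_apply _ _ _⟩, ?_⟩
  intro k
  exact hbnd k k.isLt

theorem zhang_lambda_inequality (n : ℕ) (N : (Fin n → ℝ) → ℝ)
    (hN0 : ∀ x, 0 ≤ N x) (hNeq : ∀ x, N x = 0 ↔ x = 0)
    (hNsmul : ∀ (a : ℝ) (x), N (a • x) = |a| * N x)
    (hNadd : ∀ x y, N (x + y) ≤ N x + N y) :
    sInf { l : ℝ | 0 < l ∧ ∃ e : Fin n → (Fin n → ℤ),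
        LinearIndependent ℚ (fun i => (fun j => ((e i j : ℚ)) : Fin n → ℚ)) ∧
        ∀ i, N (fun j => ((e i j : ℝ))) ≤ l } ≤
      sInf { l : ℝ | 0 < l ∧ ∃ e : Fin n → (Fin n → ℤ),
        (∃ B : Module.Basis (Fin n) ℤ (Fin n → ℤ), ∀ i, B i = e i) ∧
        ∀ i, N (fun j => ((e i j : ℝ))) ≤ l } ∧
    sInf { l : ℝ | 0 < l ∧ ∃ e : Fin n → (Fin n → ℤ),
        (∃ B : Module.Basis (Fin n) ℤ (Fin n → ℤ), ∀ i, B i = e i) ∧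
        ∀ i, N (fun j => ((e i j : ℝ))) ≤ l } ≤
      sInf { l : ℝ | 0 < l ∧ ∃ e : Fin n → (Fin n → ℤ),
        LinearIndependent ℚ (fun i => (fun j => ((e i j : ℚ)) : Fin n → ℚ)) ∧
        ∀ i, N (fun j => ((e i j : ℝ))) ≤ l } * n := by
  classical
  set S1 := { l : ℝ | 0 < l ∧ ∃ e : Fin n → (Fin n → ℤ),
        LinearIndependent ℚ (fun i => (fun j => ((e i j : ℚ)) : Fin n → ℚ)) ∧
        ∀ i, N (fun j => ((e i j : ℝ))) ≤ l } with hS1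
  set S2 := { l : ℝ | 0 < l ∧ ∃ e : Fin n → (Fin n → ℤ),
        (∃ B : Module.Basis (Fin n) ℤ (Fin n → ℤ), ∀ i, B i = e i) ∧
        ∀ i, N (fun j => ((e i j : ℝ))) ≤ l } with hS2
  -- S2 ⊆ S1 : a ℤ-basis is ℚ-linearly independent
  have hsub : S2 ⊆ S1 := by
    rintro l ⟨hl0, e, ⟨B, hB⟩, hbl⟩
    refine ⟨hl0, e, ?_, hbl⟩
    have heB : e = ⇑B := funext fun i => (hB i).symm
    set φ : (Fin n → ℤ) →ₗ[ℤ] (Fin n → ℚ) :=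
      LinearMap.compLeft (Algebra.linearMap ℤ ℚ) (Fin n) with hφdef
    have hcomp : (fun i => (fun j => ((e i j : ℚ)) : Fin n → ℚ)) = ⇑φ ∘ e := rfl
    rw [hcomp]
    have hφinj : Function.Injective ⇑φ := by
      intro x y hxy
      funext j
      have h2 : ((x j : ℚ)) = ((y j : ℚ)) := congrFun hxy j
      exact_mod_cast h2
    have hZe : LinearIndependent ℤ e := by
      rw [heB]
      exact B.linearIndependent
    have hZli : LinearIndependent ℤ (⇑φ ∘ e) :=
      hZe.map' φ (LinearMap.ker_eq_bot.mpr hφinj)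
    exact (LinearIndependent.iff_fractionRing ℤ ℚ).mp hZli
  -- nonemptiness and bounds
  have hbdd1 : BddBelow S1 := ⟨0, fun l hl => le_of_lt hl.1⟩
  have hbdd2 : BddBelow S2 := ⟨0, fun l hl => le_of_lt hl.1⟩
  have hS2ne : S2.Nonempty := by
    refine ⟨(∑ i : Fin n, N (fun j => (((Pi.single i 1 : Fin n → ℤ) j : ℝ)))) + 1, ?_,
      fun i => Pi.single i 1, ⟨Pi.basisFun ℤ (Fin n), fun i => Pi.basisFun_apply ℤ (Fin n) i⟩, ?_⟩
    · have : (0:ℝ) ≤ ∑ i : Fin n, N (fun j => (((Pi.single i 1 : Fin n → ℤ) j : ℝ))) :=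
        Finset.sum_nonneg fun i _ => hN0 _
      linarith
    · intro i
      have h1 : N (fun j => (((Pi.single i 1 : Fin n → ℤ) j : ℝ))) ≤
          ∑ k : Fin n, N (fun j => (((Pi.single k 1 : Fin n → ℤ) j : ℝ))) :=
        Finset.single_le_sum (f := fun k : Fin n => N (fun j => (((Pi.single k 1 : Fin n → ℤ) j : ℝ))))
          (fun k _ => hN0 _) (Finset.mem_univ i)
      linarith
  have hS1ne : S1.Nonempty := hS2ne.imp fun l hl => hsub hl
  constructor
  · exact csInf_le_csInf hbdd1 hS2ne hsub
  · rcases Nat.eq_zero_or_pos n with hn | hn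
    · subst hn
      have h0 : sInf S2 ≤ 0 := by
        refine le_of_forall_pos_le_add fun ε hε => ?_
        have hmem : ε ∈ S2 := by
          refine ⟨hε, fun i => Pi.single i 1,
            ⟨Pi.basisFun ℤ (Fin 0), fun i => Pi.basisFun_apply ℤ (Fin 0) i⟩, fun i => i.elim0⟩
        simpa using csInf_le hbdd2 hmem
      simpa using h0
    · have hkey : ∀ l ∈ S1, sInf S2 ≤ l * n := by
        intro l hl
        obtain ⟨hl0, e, he, hbl⟩ := hl
        obtain ⟨f, hf, hfb⟩ := key n N hN0 hNeq hNsmul hNadd l e he hbl hn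
        refine csInf_le hbdd2 ⟨?_, f, hf, hfb⟩
        have : (0:ℝ) < n := by exact_mod_cast hn
        positivity
      have h2 : sInf S2 / n ≤ sInf S1 := by
        refine le_csInf hS1ne fun l hl => ?_
        rw [div_le_iff₀ (by exact_mod_cast hn : (0:ℝ) < n)]
        exact hkey l hl
      have hn' : (0:ℝ) < n := by exact_mod_cast hn
      calc sInf S2 = sInf S2 / n * n := by field_simp
        _ ≤ sInf S1 * n := mul_le_mul_of_nonneg_right h2 (le_of_lt hn')
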